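/- Let (V,φ) and (W,ψ) be representations of Q and let I' ⊆ I. Suppose given, for each i ∈ I', a finite-dimensional vector space X_i together with linear maps f_i : V_i → X_i and g_i : X_i → W_i such that 0 → V_i → X_i → W_i → 0 is a short exact sequence (f_i injective, g_i surjective, Im f_i = Ker g_i), and, for each arrow a ∈ A with s(a), t(a) ∈ I', a linear map ξ_a : X_{s(a)} → X_{t(a)} satisfying ξ_a ∘ f_{s(a)} = f_{t(a)} ∘ φ_a and g_{t(a)} ∘ ξ_a = ψ_a ∘ g_{s(a)}. Then there exist vector spaces X_i and linear maps f_i : V_i → X_i, g_i : X_i → W_i for all i ∈ I ∖ I' with 0 → V_i → X_i → W_i → 0 exact, and linear maps ξ_a : X_{s(a)} → X_{t(a)} for all remaining arrows a ∈ A (those with s(a) ∉ I' or t(a) ∉ I'), such that ξ_a ∘ f_{s(a)} = f_{t(a)} ∘ φ_a and g_{t(a)} ∘ ξ_a = ψ_a ∘ g_{s(a)} hold for every arrow a ∈ A. (Equivalently, the restriction map Ext¹(W,V) → Ext¹(W|_{I'}, V|_{I'}) to the full subquiver on I' is surjective.) -/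

import Mathlib

noncomputable section

namespace ADEShuffle

/-- A finite-dimensional representation of the quiver with vertices `I`, arrows `A`,
source map `s` and target map `t`, over the field `k`. -/
structure QuivRep (k : Type) [Field k] (I A : Type) (s t : A → I) where
  M : I → Type
  [instAdd : ∀ i, AddCommGroup (M i)]
  [instMod : ∀ i, Module k (M i)]
  [instFD : ∀ i, FiniteDimensional k (M i)]
  map : ∀ a, M (s a) →ₗ[k] M (t a)

attribute [instance] QuivRep.instAdd QuivRep.instMod QuivRep.instFD

/-- Splitting of a short exact sequence of vector spaces. -/
lemma split_ses {k : Type} [Field k] {V X W : Type}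
    [AddCommGroup V] [Module k V] [AddCommGroup X] [Module k X]
    [AddCommGroup W] [Module k W]
    (f : V →ₗ[k] X) (g : X →ₗ[k] W)
    (hf : Function.Injective f) (hg : Function.Surjective g)
    (h : LinearMap.range f = LinearMap.ker g) :
    ∃ E : X ≃ₗ[k] V × W,
      E.toLinearMap.comp f = LinearMap.inl k V W ∧
      (LinearMap.snd k V W).comp E.toLinearMap = g := by
  obtain ⟨σ, hσ⟩ := g.exists_rightInverse_of_surjective (LinearMap.range_eq_top.2 hg)
  obtain ⟨r, hr⟩ := f.exists_leftInverse_of_injective (LinearMap.ker_eq_bot.2 hf)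
  have hσ' : ∀ w, g (σ w) = w := fun w => congrArg (· w) (congrArg DFunLike.coe hσ)
  have hr' : ∀ v, r (f v) = v := fun v => congrArg (· v) (congrArg DFunLike.coe hr)
  have hgf : ∀ v, g (f v) = 0 := by
    intro v
    have : f v ∈ LinearMap.ker g := h ▸ LinearMap.mem_range_self f v
    exact this
  have hfr : ∀ x, g x = 0 → f (r x) = x := by
    intro x hx
    obtain ⟨v, hv⟩ : x ∈ LinearMap.range f := h ▸ hx
    rw [← hv, hr']
  refine ⟨{
    toLinearMap := LinearMap.prod (r.comp (LinearMap.id - σ.comp g)) g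
    invFun := fun p => f p.1 + σ p.2
    left_inv := ?_
    right_inv := ?_ }, ?_, ?_⟩
  · intro x
    simp only [LinearMap.toFun_eq_coe, LinearMap.prod_apply, Function.prod, LinearMap.comp_apply,
      LinearMap.sub_apply, LinearMap.id_apply]
    rw [hfr (x - σ (g x)) (by simp [hσ'])]
    abel
  · intro p
    simp only [LinearMap.toFun_eq_coe, LinearMap.prod_apply, Function.prod, LinearMap.comp_apply,
      LinearMap.sub_apply, LinearMap.id_apply, map_add, map_zero, hgf, hσ', zero_add]
    ext
    · simp [hgf, hσ', hr']
    · simp [hgf, hσ']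
  · apply LinearMap.ext; intro v
    apply Prod.ext
    · simp [LinearMap.prod_apply, hr', hgf, hσ']
    · simp [LinearMap.prod_apply, hr', hgf, hσ']
  · apply LinearMap.ext; intro x
    simp [LinearMap.prod_apply]


/-- any extension of `W|_{I'}` by `V|_{I'}` over the full subquiver on a
vertex subset `I'` extends to an extension of `W` by `V` over the whole quiver; i.e.
the restriction map `Ext¹(W,V) → Ext¹(W|_{I'},V|_{I'})` is surjective. -/
theorem stmt6
    (k : Type) [Field k] (I A : Type) [Fintype I] [Fintype A] (s t : A → I)
    (V W : QuivRep k I A s t) (I' : Set I)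
    (X : I → Type) [∀ i, AddCommGroup (X i)] [∀ i, Module k (X i)]
    [∀ i, FiniteDimensional k (X i)]
    (f : ∀ i, V.M i →ₗ[k] X i) (g : ∀ i, X i →ₗ[k] W.M i)
    (ξ : ∀ a, X (s a) →ₗ[k] X (t a))
    (hses : ∀ i ∈ I', Function.Injective (f i) ∧ Function.Surjective (g i) ∧
      LinearMap.range (f i) = LinearMap.ker (g i))
    (hcomm : ∀ a, s a ∈ I' → t a ∈ I' →
      (ξ a).comp (f (s a)) = (f (t a)).comp (V.map a) ∧
      (g (t a)).comp (ξ a) = (W.map a).comp (g (s a))) :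
    ∃ (Y : QuivRep k I A s t) (F : ∀ i, V.M i →ₗ[k] Y.M i)
      (G : ∀ i, Y.M i →ₗ[k] W.M i),
      (∀ i, Function.Injective (F i) ∧ Function.Surjective (G i) ∧
        LinearMap.range (F i) = LinearMap.ker (G i)) ∧
      (∀ a, (Y.map a).comp (F (s a)) = (F (t a)).comp (V.map a) ∧
        (G (t a)).comp (Y.map a) = (W.map a).comp (G (s a))) ∧
      ∃ e : ∀ i, i ∈ I' → (Y.M i ≃ₗ[k] X i),
        (∀ i (h : i ∈ I'),
          (e i h).toLinearMap.comp (F i) = f i ∧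
          (g i).comp (e i h).toLinearMap = G i) ∧
        (∀ a (hs : s a ∈ I') (ht : t a ∈ I'),
          (ξ a).comp (e (s a) hs).toLinearMap =
            (e (t a) ht).toLinearMap.comp (Y.map a)) := by
  classical
  choose E hE1 hE2 using fun i (hi : i ∈ I') =>
    split_ses (f i) (g i) (hses i hi).1 (hses i hi).2.1 (hses i hi).2.2
  have hE1' : ∀ i (hi : i ∈ I') (v : V.M i), E i hi (f i v) = (v, 0) := by
    intro i hi v
    have := LinearMap.congr_fun (hE1 i hi) v
    simpa using this
  have hE1'' : ∀ i (hi : i ∈ I') (v : V.M i), (E i hi).symm (v, 0) = f i v := by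
    intro i hi v
    rw [← hE1' i hi v, LinearEquiv.symm_apply_apply]
  have hE2' : ∀ i (hi : i ∈ I') (x : X i), (E i hi x).2 = g i x := by
    intro i hi x
    have := LinearMap.congr_fun (hE2 i hi) x
    simpa using this
  refine ⟨{ M := fun i => V.M i × W.M i,
            map := fun a =>
              if h : s a ∈ I' ∧ t a ∈ I' then
                (E (t a) h.2).toLinearMap.comp
                  ((ξ a).comp (E (s a) h.1).symm.toLinearMap)
              else (V.map a).prodMap (W.map a) },
    fun i => LinearMap.inl k _ _, fun i => LinearMap.snd k _ _, ?_, ?_,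
    ⟨fun i hi => (E i hi).symm, ?_, ?_⟩⟩
  · intro i
    refine ⟨LinearMap.inl_injective, Prod.snd_surjective, ?_⟩
    ext p
    simp [LinearMap.mem_range, Prod.ext_iff, eq_comm]
  · intro a
    by_cases h : s a ∈ I' ∧ t a ∈ I'
    · simp only [dif_pos h]
      constructor
      · apply LinearMap.ext; intro v
        have h1 := LinearMap.congr_fun (hcomm a h.1 h.2).1 v
        simp only [LinearMap.comp_apply] at h1 ⊢
        simp only [LinearMap.inl_apply, LinearEquiv.coe_coe, hE1'' (s a) h.1 v, h1,
          hE1' (t a) h.2]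
      · apply LinearMap.ext; intro p
        have h2 := LinearMap.congr_fun (hcomm a h.1 h.2).2 ((E (s a) h.1).symm p)
        simp only [LinearMap.comp_apply] at h2 ⊢
        simp only [LinearMap.snd_apply, LinearEquiv.coe_coe, hE2' (t a) h.2, h2]
        rw [← hE2' (s a) h.1, LinearEquiv.apply_symm_apply]
    · simp only [dif_neg h]
      constructor
      · apply LinearMap.ext; intro v
        simp
      · apply LinearMap.ext; intro p
        simp
  · intro i hi
    constructor
    · apply LinearMap.ext; intro v
      simp [hE1'' i hi v]
    · apply LinearMap.ext; intro p
      simp only [LinearMap.comp_apply, LinearEquiv.coe_coe, LinearMap.snd_apply]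
      rw [← hE2' i hi, LinearEquiv.apply_symm_apply]
  · intro a hs ht
    have h : s a ∈ I' ∧ t a ∈ I' := ⟨hs, ht⟩
    simp only [dif_pos h]
    apply LinearMap.ext; intro p
    simp

end ADEShuffle
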